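/- For every B ≥ 1 there exists C > 0, depending only on B, with the following property. Let x, a : ℕ → ℝ satisfy |x_{i−1} + (3πi/2)^{2/3}| ≤ B and |a_{i−1} + (3πi/2)^{2/3}| ≤ B for all i ≥ 1. Then for every w ∈ ℂ with |arg w| < 3π/4 and |w| > 2B, the series ∑_{i∈ℕ} (1/(x_i − w) − 1/(a_i − w)) converges absolutely and its sum has modulus at most C · |w|^{−1/2}. -/

import Mathlib

open Real Filter

lemma stmt6_sqrt2 : Real.sqrt 2 ≤ 8/5 := by
  rw [show (8:ℝ)/5 = Real.sqrt ((8/5)^2) from (Real.sqrt_sq (by norm_num)).symm]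
  apply Real.sqrt_le_sqrt; norm_num

lemma stmt6_re_lower (w : ℂ) (hw : w ≠ 0) (h : |w.arg| ≤ 3 * Real.pi / 4) :
    -(Real.sqrt 2 / 2) * ‖w‖ ≤ w.re := by
  have habs : 0 < ‖w‖ := norm_pos_iff.mpr hw
  have h1 : Real.cos (3 * Real.pi / 4) ≤ Real.cos |w.arg| :=
    Real.cos_le_cos_of_nonneg_of_le_pi (abs_nonneg _) (by linarith [Real.pi_pos]) h
  have h2 : Real.cos (3 * Real.pi / 4) = -(Real.sqrt 2 / 2) := by
    rw [show 3 * Real.pi / 4 = Real.pi - Real.pi / 4 by ring, Real.cos_pi_sub,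
      Real.cos_pi_div_four]
  rw [Real.cos_abs, Complex.cos_arg hw, h2] at h1
  exact (le_div_iff₀ habs).mp h1

lemma stmt6_low (B t : ℝ) (hB : 1 ≤ B) (w : ℂ) (harg : |w.arg| ≤ 3 * Real.pi / 4)
    (hr : 2 * B < ‖w‖) (ht : t ≤ B) :
    (t ^ 2 + (‖w‖) ^ 2) / 5 ≤ (‖(t : ℂ) - w‖) ^ 2 := by
  have hr0 : 0 < ‖w‖ := by linarith
  have hw : w ≠ 0 := by
    intro h; rw [h] at hr; simp at hr; linarith
  have hre : -(Real.sqrt 2 / 2) * ‖w‖ ≤ w.re := stmt6_re_lower w hw harg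
  have hre2 : w.re ≤ ‖w‖ := le_trans (le_abs_self _) (Complex.abs_re_le_norm w)
  have hsq : (‖(t : ℂ) - w‖) ^ 2 = (t - w.re) ^ 2 + w.im ^ 2 := by
    rw [Complex.sq_norm, Complex.normSq_apply]; simp [Complex.sub_re, Complex.sub_im]; ring
  have habs2 : (‖w‖) ^ 2 = w.re ^ 2 + w.im ^ 2 := by
    rw [Complex.sq_norm, Complex.normSq_apply]; ring
  rw [hsq]
  rcases le_or_gt t 0 with ht0 | ht0
  · nlinarith [sq_nonneg (t + ‖w‖), stmt6_sqrt2,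
      mul_nonneg (neg_nonneg.2 ht0) hr0.le]
  · have h2t : 2 * t < ‖w‖ := by linarith
    nlinarith [mul_nonneg (by linarith : (0:ℝ) ≤ ‖w‖ - 2*t)
      (by linarith : (0:ℝ) ≤ 2*‖w‖ - t)]

lemma stmt6_tele (t : ℝ) (ht : 1 ≤ t) :
    (t + 1) ^ (-(4/3) : ℝ) ≤ 3 * (t ^ (-(1/3) : ℝ) - (t + 1) ^ (-(1/3) : ℝ)) := by
  have ht0 : (0:ℝ) ≤ t := by linarith
  have ht1 : (0:ℝ) ≤ t + 1 := by linarith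
  set a := t ^ ((1:ℝ)/3) with hadef
  set b := (t + 1) ^ ((1:ℝ)/3) with hbdef
  have ha1 : 1 ≤ a := Real.one_le_rpow ht (by norm_num)
  have hab : a ≤ b := Real.rpow_le_rpow ht0 (by linarith) (by norm_num)
  have ha0 : 0 < a := by linarith
  have hb0 : 0 < b := by linarith
  have hacube : a ^ (3:ℕ) = t := by
    rw [hadef, ← Real.rpow_natCast (t ^ ((1:ℝ)/3)) 3, ← Real.rpow_mul ht0]
    norm_num
  have hbcube : b ^ (3:ℕ) = t + 1 := by
    rw [hbdef, ← Real.rpow_natCast ((t+1) ^ ((1:ℝ)/3)) 3, ← Real.rpow_mul ht1]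
    norm_num
  have e1 : t ^ (-(1/3) : ℝ) = a⁻¹ := by
    rw [hadef, ← Real.rpow_neg ht0]
  have e2 : (t + 1) ^ (-(1/3) : ℝ) = b⁻¹ := by
    rw [hbdef, ← Real.rpow_neg ht1]
  have e3 : (t + 1) ^ (-(4/3) : ℝ) = (b ^ (4:ℕ))⁻¹ := by
    rw [hbdef, ← Real.rpow_natCast ((t+1) ^ ((1:ℝ)/3)) 4, ← Real.rpow_mul ht1,
      ← Real.rpow_neg ht1]
    norm_num
  rw [e1, e2, e3]
  have hcube : b ^ 3 = a ^ 3 + 1 := by rw [hacube, hbcube]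
  have h1 : 1 ≤ 3 * b ^ 2 * (b - a) := by
    nlinarith [mul_nonneg (sq_nonneg (b - a)) (by linarith : (0:ℝ) ≤ 2*b + a)]
  have hinv : a⁻¹ - b⁻¹ = (b - a) / (a * b) := by
    field_simp
  rw [hinv, show 3*((b-a)/(a*b)) = (3*(b-a))/(a*b) by ring, inv_eq_one_div,
    div_le_div_iff₀ (by positivity) (by positivity)]
  nlinarith [h1, mul_le_mul_of_nonneg_left h1 (sq_nonneg b), sq_nonneg b, hb0, ha0, hab]

lemma stmt6_tail (N : ℕ) (hN : 1 ≤ N) :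
    Summable (fun i : ℕ => (((i : ℝ) + N) + 1) ^ (-(4/3) : ℝ)) ∧
    ∑' i : ℕ, (((i : ℝ) + N) + 1) ^ (-(4/3) : ℝ) ≤ 3 * (N : ℝ) ^ (-(1/3) : ℝ) := by
  set h : ℕ → ℝ := fun i => ((i : ℝ) + N) ^ (-(1/3) : ℝ) with hh
  have hpos : ∀ i : ℕ, (1:ℝ) ≤ (i : ℝ) + N := by
    intro i
    have h1 : (1:ℝ) ≤ (N : ℝ) := by exact_mod_cast hN
    have h2 : (0:ℝ) ≤ (i : ℝ) := Nat.cast_nonneg i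
    linarith
  have hmono : ∀ i : ℕ, h (i+1) ≤ h i := by
    intro i
    apply Real.rpow_le_rpow_of_nonpos (by linarith [hpos i]) (by push_cast; linarith)
      (by norm_num)
  have hnn : ∀ i, 0 ≤ h i - h (i+1) := fun i => sub_nonneg.2 (hmono i)
  have htend : Tendsto h atTop (nhds 0) := by
    have h1 : Tendsto (fun i : ℕ => (i : ℝ) + N) atTop atTop :=
      tendsto_atTop_add_const_right _ _ tendsto_natCast_atTop_atTop
    exact (tendsto_rpow_neg_atTop (by norm_num : (0:ℝ) < 1/3)).comp h1
  have hhs : HasSum (fun i => h i - h (i+1)) (h 0) := by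
    rw [hasSum_iff_tendsto_nat_of_nonneg hnn]
    have := Filter.Tendsto.const_sub (h 0) htend
    simpa using this.congr (fun n => (Finset.sum_range_sub' h n).symm)
  have hterm : ∀ i : ℕ, (((i : ℝ) + N) + 1) ^ (-(4/3) : ℝ) ≤ 3 * (h i - h (i+1)) := by
    intro i
    simp only [hh]
    have e : (((i+1 : ℕ)) : ℝ) + (N : ℝ) = ((i : ℝ) + (N : ℝ)) + 1 := by push_cast; ring
    rw [e]
    exact stmt6_tele _ (hpos i)
  have hsum : Summable (fun i : ℕ => (((i : ℝ) + N) + 1) ^ (-(4/3) : ℝ)) :=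
    Summable.of_nonneg_of_le (fun i => Real.rpow_nonneg (by linarith [hpos i]) _) hterm
      (hhs.summable.mul_left 3)
  refine ⟨hsum, ?_⟩
  calc ∑' i : ℕ, (((i : ℝ) + N) + 1) ^ (-(4/3) : ℝ)
      ≤ ∑' i : ℕ, 3 * (h i - h (i+1)) :=
        Summable.tsum_le_tsum hterm hsum (hhs.summable.mul_left 3)
    _ = 3 * (h 0) := by rw [tsum_mul_left, hhs.tsum_eq]
    _ = 3 * (N : ℝ) ^ (-(1/3) : ℝ) := by simp [hh]

set_option maxHeartbeats 1000000 in
/-- Comparison estimate (2.14)–(2.15): if both `x` and `a` stay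
within `B` of the reference points `−(3πi/2)^{2/3}`, then for `|arg w| < 3π/4`,
`|w| > 2B`, the series `∑ᵢ (1/(xᵢ − w) − 1/(aᵢ − w))` converges absolutely and its
sum has modulus at most `C·|w|^{−1/2}`, with `C` depending only on `B`. -/
theorem stmt_6 (B : ℝ) (hB : 1 ≤ B) :
    ∃ C : ℝ, 0 < C ∧
      ∀ x a : ℕ → ℝ,
        (∀ i : ℕ, 1 ≤ i →
          |x (i - 1) + (3 * Real.pi * i / 2) ^ ((2 : ℝ) / 3)| ≤ B) →
        (∀ i : ℕ, 1 ≤ i →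
          |a (i - 1) + (3 * Real.pi * i / 2) ^ ((2 : ℝ) / 3)| ≤ B) →
        ∀ w : ℂ, |Complex.arg w| < 3 * Real.pi / 4 → 2 * B < ‖w‖ →
          Summable (fun i : ℕ =>
            ‖((x i : ℂ) - w)⁻¹ - ((a i : ℂ) - w)⁻¹‖) ∧
          ‖∑' i : ℕ, (((x i : ℂ) - w)⁻¹ - ((a i : ℂ) - w)⁻¹)‖
            ≤ C * ‖w‖ ^ (-(1/2) : ℝ) := by
  refine ⟨50 * B, by linarith, ?_⟩
  intro x a hx ha w harg hrw
  have hr0 : (0:ℝ) < ‖w‖ := by linarith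
  have hr2 : (2:ℝ) ≤ ‖w‖ := by linarith
  have harg' : |w.arg| ≤ 3 * Real.pi / 4 := le_of_lt harg
  set r := ‖w‖ with hrdef
  -- the reference points dominate 2·(n+1)^{2/3}
  have hc : ∀ n : ℕ, 2 * ((n:ℝ)+1) ^ ((2:ℝ)/3) ≤ (3 * Real.pi * ((n+1 : ℕ):ℝ) / 2) ^ ((2:ℝ)/3) := by
    intro n
    have hn1 : (0:ℝ) ≤ (n:ℝ) + 1 := by positivity
    have h232 : ((2:ℝ) ^ ((3:ℝ)/2)) ^ ((2:ℝ)/3) = 2 := by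
      rw [← Real.rpow_mul (by norm_num : (0:ℝ) ≤ 2),
        show ((3:ℝ)/2) * ((2:ℝ)/3) = 1 by norm_num, Real.rpow_one]
    have h23le : (2:ℝ) ^ ((3:ℝ)/2) ≤ 3 := by
      have h8 : ((2:ℝ) ^ ((3:ℝ)/2)) ^ (2:ℕ) = 8 := by
        rw [← Real.rpow_natCast ((2:ℝ) ^ ((3:ℝ)/2)) 2, ← Real.rpow_mul (by norm_num : (0:ℝ) ≤ 2),
          show ((3:ℝ)/2) * ((2:ℕ):ℝ) = ((3:ℕ):ℝ) by norm_num, Real.rpow_natCast]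
        norm_num
      nlinarith [Real.rpow_nonneg (by norm_num : (0:ℝ) ≤ 2) ((3:ℝ)/2)]
    have hpi : (3:ℝ) ≤ 3 * Real.pi / 2 := by
      have := Real.pi_gt_three
      linarith
    calc 2 * ((n:ℝ)+1) ^ ((2:ℝ)/3)
        = ((2:ℝ) ^ ((3:ℝ)/2)) ^ ((2:ℝ)/3) * ((n:ℝ)+1) ^ ((2:ℝ)/3) := by rw [h232]
      _ = ((2:ℝ) ^ ((3:ℝ)/2) * ((n:ℝ)+1)) ^ ((2:ℝ)/3) := by
          rw [← Real.mul_rpow (Real.rpow_nonneg (by norm_num) _) hn1]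
      _ ≤ (3 * Real.pi * ((n+1 : ℕ):ℝ) / 2) ^ ((2:ℝ)/3) := by
          apply Real.rpow_le_rpow (by positivity) ?_ (by norm_num)
          push_cast
          have h' : (2:ℝ) ^ ((3:ℝ)/2) * ((n:ℝ)+1) ≤ (3 * Real.pi / 2) * ((n:ℝ)+1) :=
            mul_le_mul_of_nonneg_right (by linarith) hn1
          linarith [h']
  -- basic consequences of the hypotheses
  have hxfacts : ∀ (y : ℕ → ℝ),
      (∀ i : ℕ, 1 ≤ i → |y (i - 1) + (3 * Real.pi * i / 2) ^ ((2 : ℝ) / 3)| ≤ B) →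
      ∀ n : ℕ, y n ≤ B ∧ max (2 * ((n:ℝ)+1) ^ ((2:ℝ)/3) - B) 0 ≤ |y n| := by
    intro y hy n
    have h := hy (n+1) (Nat.succ_le_succ (Nat.zero_le n))
    rw [Nat.add_sub_cancel] at h
    have hcn := hc n
    set c := (3 * Real.pi * ((n+1 : ℕ):ℝ) / 2) ^ ((2:ℝ)/3) with hcdef
    have hc0 : 0 ≤ c := Real.rpow_nonneg (by positivity) _
    have hcb := abs_le.mp h
    have h1 : y n ≤ B := by linarith [hcb.2]
    have h2 : c - B ≤ |y n| := by
      have hyn : -(y n) ≥ c - B := by linarith [hcb.2]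
      linarith [neg_le_abs (y n)]
    refine ⟨h1, max_le ?_ (abs_nonneg _)⟩
    linarith
  -- the comparison function
  set D : ℕ → ℝ := fun n => max (2 * ((n:ℝ)+1) ^ ((2:ℝ)/3) - B) 0 with hD
  set g : ℕ → ℝ := fun n => 10 * B / ((D n) ^ 2 + r ^ 2) with hg
  have hden : ∀ n, 0 < (D n) ^ 2 + r ^ 2 := by
    intro n
    have h1 : 0 ≤ (D n)^2 := sq_nonneg _
    nlinarith
  have hg0 : ∀ n, 0 ≤ g n := by
    intro n; simp only [hg]; positivity
  -- term-wise comparison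
  have hterm : ∀ n, ‖((x n : ℂ) - w)⁻¹ - ((a n : ℂ) - w)⁻¹‖ ≤ g n := by
    intro n
    obtain ⟨hx1, hx2⟩ := hxfacts x hx n
    obtain ⟨ha1, ha2⟩ := hxfacts a ha n
    have hD0 : (0:ℝ) ≤ D n := le_max_right _ _
    have hDx : (D n) ^ 2 ≤ (x n) ^ 2 := by
      rw [← sq_abs (x n)]; exact pow_le_pow_left₀ hD0 hx2 2
    have hDa : (D n) ^ 2 ≤ (a n) ^ 2 := by
      rw [← sq_abs (a n)]; exact pow_le_pow_left₀ hD0 ha2 2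
    have hpx : ((D n) ^ 2 + r ^ 2) / 5 ≤ (‖(x n : ℂ) - w‖) ^ 2 := by
      have h' := stmt6_low B (x n) hB w harg' hrw hx1
      rw [← hrdef] at h'
      linarith
    have hpa : ((D n) ^ 2 + r ^ 2) / 5 ≤ (‖(a n : ℂ) - w‖) ^ 2 := by
      have h' := stmt6_low B (a n) hB w harg' hrw ha1
      rw [← hrdef] at h'
      linarith
    have hs0 : 0 < ((D n) ^ 2 + r ^ 2) / 5 := by linarith [hden n]
    have hsx : Real.sqrt (((D n) ^ 2 + r ^ 2) / 5) ≤ ‖(x n : ℂ) - w‖ := by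
      calc Real.sqrt (((D n) ^ 2 + r ^ 2) / 5)
          ≤ Real.sqrt ((‖(x n : ℂ) - w‖) ^ 2) := Real.sqrt_le_sqrt hpx
        _ = ‖(x n : ℂ) - w‖ := Real.sqrt_sq (norm_nonneg _)
    have hsa : Real.sqrt (((D n) ^ 2 + r ^ 2) / 5) ≤ ‖(a n : ℂ) - w‖ := by
      calc Real.sqrt (((D n) ^ 2 + r ^ 2) / 5)
          ≤ Real.sqrt ((‖(a n : ℂ) - w‖) ^ 2) := Real.sqrt_le_sqrt hpa
        _ = ‖(a n : ℂ) - w‖ := Real.sqrt_sq (norm_nonneg _)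
    have hsqrt0 : 0 < Real.sqrt (((D n) ^ 2 + r ^ 2) / 5) := Real.sqrt_pos.mpr hs0
    have hXw : ((x n : ℂ) - w) ≠ 0 := by
      intro h
      have hpos : (0:ℝ) < ‖(x n : ℂ) - w‖ := lt_of_lt_of_le hsqrt0 hsx
      rw [h] at hpos; simp at hpos
    have hAw : ((a n : ℂ) - w) ≠ 0 := by
      intro h
      have hpos : (0:ℝ) < ‖(a n : ℂ) - w‖ := lt_of_lt_of_le hsqrt0 hsa
      rw [h] at hpos; simp at hpos
    rw [inv_sub_inv hXw hAw, norm_div, norm_mul]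
    have hnum : ‖((a n : ℂ) - w) - ((x n : ℂ) - w)‖ = |a n - x n| := by
      rw [show ((a n : ℂ) - w) - ((x n : ℂ) - w) = ((a n - x n : ℝ) : ℂ) by push_cast; ring,
        Complex.norm_real, Real.norm_eq_abs]
    rw [hnum]
    have hnum2 : |a n - x n| ≤ 2 * B := by
      have h1 := hx (n+1) (Nat.succ_le_succ (Nat.zero_le n))
      have h2 := ha (n+1) (Nat.succ_le_succ (Nat.zero_le n))
      rw [Nat.add_sub_cancel] at h1 h2
      set c := (3 * Real.pi * ((n+1 : ℕ):ℝ) / 2) ^ ((2:ℝ)/3) with hcdef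
      rw [show a n - x n = (a n + c) - (x n + c) by ring, sub_eq_add_neg]
      refine (abs_add_le _ _).trans ?_
      rw [abs_neg]
      linarith
    have hprod : ((D n) ^ 2 + r ^ 2) / 5 ≤
        ‖(x n : ℂ) - w‖ * ‖(a n : ℂ) - w‖ := by
      have h' := mul_le_mul hsx hsa hsqrt0.le (norm_nonneg _)
      rwa [Real.mul_self_sqrt hs0.le] at h'
    have hform : g n = 2 * B / (((D n) ^ 2 + r ^ 2) / 5) := by
      simp only [hg]
      rw [div_div_eq_mul_div]
      ring_nf
    rw [hform]
    exact div_le_div₀ (by linarith) hnum2 hs0 hprod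
  -- the cutoff
  obtain ⟨N, hN1, hNge, hNle⟩ :
      ∃ N : ℕ, 1 ≤ N ∧ r ^ ((3:ℝ)/2) ≤ (N:ℝ) ∧ (N:ℝ) ≤ r ^ ((3:ℝ)/2) + 1 :=
    ⟨⌈r ^ ((3:ℝ)/2)⌉₊, Nat.one_le_ceil_iff.mpr (by positivity), Nat.le_ceil _,
      le_of_lt (Nat.ceil_lt_add_one (by positivity))⟩
  have hr32_1 : (1:ℝ) ≤ r ^ ((3:ℝ)/2) := Real.one_le_rpow (by linarith) (by norm_num)
  have hB32 : B ^ ((3:ℝ)/2) ≤ r ^ ((3:ℝ)/2) :=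
    Real.rpow_le_rpow (by linarith) (by linarith) (by norm_num)
  -- tail estimate for g
  have htail : ∀ m : ℕ, N ≤ m → g m ≤ 10 * B * ((m:ℝ)+1) ^ (-(4/3) : ℝ) := by
    intro m hm
    have hm1 : B ^ ((3:ℝ)/2) ≤ (m:ℝ) + 1 := by
      have hNm : (N:ℝ) ≤ (m:ℝ) := Nat.cast_le.mpr hm
      linarith
    have hBle : B ≤ ((m:ℝ)+1) ^ ((2:ℝ)/3) := by
      calc B = (B ^ ((3:ℝ)/2)) ^ ((2:ℝ)/3) := by
            rw [← Real.rpow_mul (by linarith), show ((3:ℝ)/2) * ((2:ℝ)/3) = 1 by norm_num,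
              Real.rpow_one]
        _ ≤ ((m:ℝ)+1) ^ ((2:ℝ)/3) := Real.rpow_le_rpow (by positivity) hm1 (by norm_num)
    have hDm : ((m:ℝ)+1) ^ ((2:ℝ)/3) ≤ D m := by
      simp only [hD]
      refine le_trans ?_ (le_max_left _ _)
      linarith
    have hD2 : ((m:ℝ)+1) ^ ((4:ℝ)/3) ≤ (D m) ^ 2 := by
      calc ((m:ℝ)+1) ^ ((4:ℝ)/3) = (((m:ℝ)+1) ^ ((2:ℝ)/3)) ^ (2:ℕ) := by
            rw [← Real.rpow_natCast (((m:ℝ)+1) ^ ((2:ℝ)/3)) 2,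
              ← Real.rpow_mul (by positivity : (0:ℝ) ≤ (m:ℝ)+1)]
            norm_num
        _ ≤ (D m) ^ 2 := pow_le_pow_left₀ (by positivity) hDm 2
    calc g m = 10 * B / ((D m) ^ 2 + r ^ 2) := by simp only [hg]
      _ ≤ 10 * B / (((m:ℝ)+1) ^ ((4:ℝ)/3)) := by
          apply div_le_div_of_nonneg_left (by linarith) (by positivity)
          nlinarith [sq_nonneg r]
      _ = 10 * B * ((m:ℝ)+1) ^ (-(4/3) : ℝ) := by
          rw [div_eq_mul_inv, ← Real.rpow_neg (by positivity : (0:ℝ) ≤ (m:ℝ)+1)]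
  -- summability of g
  have hSg : Summable g := by
    rw [← summable_nat_add_iff N]
    apply Summable.of_nonneg_of_le (fun i => hg0 _) ?_ ((stmt6_tail N hN1).1.mul_left (10 * B))
    intro i
    have h' := htail (i + N) (Nat.le_add_left N i)
    push_cast at h' ⊢
    exact h'
  -- summability of the absolute values
  have hSabs : Summable (fun i : ℕ => ‖((x i : ℂ) - w)⁻¹ - ((a i : ℂ) - w)⁻¹‖) :=
    Summable.of_nonneg_of_le (fun i => norm_nonneg _) hterm hSg
  -- the main sum bound
  have hmain : ∑' n, g n ≤ 50 * B * r ^ (-(1/2) : ℝ) := by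
    rw [← Summable.sum_add_tsum_nat_add N hSg]
    have hfin : ∑ i ∈ Finset.range N, g i ≤ 20 * B * r ^ (-(1/2) : ℝ) := by
      have h1 : ∀ i ∈ Finset.range N, g i ≤ 10 * B / r ^ 2 := by
        intro i _
        simp only [hg]
        apply div_le_div_of_nonneg_left (by linarith) (by positivity)
        nlinarith [sq_nonneg (D i)]
      calc ∑ i ∈ Finset.range N, g i ≤ (Finset.range N).card • (10 * B / r ^ 2) :=
            Finset.sum_le_card_nsmul _ _ _ h1
        _ = (N:ℝ) * (10 * B / r ^ 2) := by rw [Finset.card_range, nsmul_eq_mul]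
        _ ≤ (2 * r ^ ((3:ℝ)/2)) * (10 * B / r ^ 2) := by
            apply mul_le_mul_of_nonneg_right ?_ (by positivity)
            linarith
        _ = 20 * B * (r ^ ((3:ℝ)/2) / r ^ 2) := by ring
        _ = 20 * B * r ^ (-(1/2) : ℝ) := by
            congr 1
            rw [← Real.rpow_natCast r 2, ← Real.rpow_sub hr0]
            norm_num
    have htl : ∑' i, g (i + N) ≤ 30 * B * r ^ (-(1/2) : ℝ) := by
      have hcomp : ∀ i : ℕ, g (i + N) ≤ 10 * B * (((i:ℝ) + N) + 1) ^ (-(4/3) : ℝ) := by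
        intro i
        have h' := htail (i + N) (Nat.le_add_left N i)
        push_cast at h' ⊢
        exact h'
      have hNr : (N:ℝ) ^ (-(1/3) : ℝ) ≤ r ^ (-(1/2) : ℝ) := by
        have h1 : (r ^ ((3:ℝ)/2)) ^ (-(1/3) : ℝ) = r ^ (-(1/2) : ℝ) := by
          rw [← Real.rpow_mul hr0.le]
          norm_num
        rw [← h1]
        exact Real.rpow_le_rpow_of_nonpos (by positivity) hNge (by norm_num)
      calc ∑' i, g (i + N) ≤ ∑' i : ℕ, 10 * B * (((i:ℝ) + N) + 1) ^ (-(4/3) : ℝ) :=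
            Summable.tsum_le_tsum hcomp ((summable_nat_add_iff N).mpr hSg)
              ((stmt6_tail N hN1).1.mul_left (10 * B))
        _ = 10 * B * ∑' i : ℕ, (((i:ℝ) + N) + 1) ^ (-(4/3) : ℝ) := tsum_mul_left
        _ ≤ 10 * B * (3 * (N:ℝ) ^ (-(1/3) : ℝ)) :=
            mul_le_mul_of_nonneg_left (stmt6_tail N hN1).2 (by linarith)
        _ = 30 * B * (N:ℝ) ^ (-(1/3) : ℝ) := by ring
        _ ≤ 30 * B * r ^ (-(1/2) : ℝ) :=
            mul_le_mul_of_nonneg_left hNr (by linarith)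
    linarith
  refine ⟨hSabs, ?_⟩
  have hf : Summable (fun i : ℕ => ((x i : ℂ) - w)⁻¹ - ((a i : ℂ) - w)⁻¹) := by
    apply Summable.of_norm
    simpa using hSabs
  calc ‖∑' i : ℕ, (((x i : ℂ) - w)⁻¹ - ((a i : ℂ) - w)⁻¹)‖
      = ‖∑' i : ℕ, (((x i : ℂ) - w)⁻¹ - ((a i : ℂ) - w)⁻¹)‖ := rfl
    _ ≤ ∑' i : ℕ, ‖((x i : ℂ) - w)⁻¹ - ((a i : ℂ) - w)⁻¹‖ :=
        norm_tsum_le_tsum_norm (by simpa using hSabs)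
    _ = ∑' i : ℕ, ‖((x i : ℂ) - w)⁻¹ - ((a i : ℂ) - w)⁻¹‖ := by
        rfl
    _ ≤ ∑' i : ℕ, g i := Summable.tsum_le_tsum hterm hSabs hSg
    _ ≤ 50 * B * r ^ (-(1/2) : ℝ) := hmain
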